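/- Let E be a full heap over A, where P is finite, let q in P, and let F, F' be proper ideals of E with chi(F, F') = e_q or chi(F, F') = -e_q. Then for every p in P, chi(S_p(F), S_p(F')) = s_p(chi(F, F')), where s_p acts on Z^P via the reflection representation. -/

import Mathlib

/-- Two vertices of the Dynkin diagram are adjacent if they are distinct
and the corresponding entry of the generalized Cartan matrix is nonzero. -/
def Adj {P : Type*} (A : P → P → ℤ) (p q : P) : Prop := p ≠ q ∧ A p q ≠ 0

/-- A generalized Cartan matrix with all entries in {2, 0, -1, -2}. -/
def IsGCM {P : Type*} (A : P → P → ℤ) : Prop :=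
  (∀ p, A p p = 2) ∧ (∀ p q, p ≠ q → A p q ≤ 0) ∧
  (∀ p q, (A p q = 0 ↔ A q p = 0)) ∧
  (∀ p q, A p q = 2 ∨ A p q = 0 ∨ A p q = -1 ∨ A p q = -2)

/-- An ideal (downward-closed subset) of a partially ordered set. -/
def IsIdeal {E : Type*} [PartialOrder E] (F : Set E) : Prop :=
  ∀ ⦃x : E⦄, x ∈ F → ∀ ⦃y : E⦄, y ≤ x → y ∈ F

/-- A proper ideal: an ideal meeting each fibre `eps ⁻¹ {p}` in a nonempty
proper subset. -/
def IsProperIdeal {P E : Type*} [PartialOrder E] (eps : E → P) (F : Set E) : Prop :=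
  IsIdeal F ∧ ∀ p : P, (∃ a, eps a = p ∧ a ∈ F) ∧ (∃ a, eps a = p ∧ a ∉ F)

/-- A full heap over the generalized Cartan matrix `A` with labelling map `eps`.
Local finiteness is expressed by the `LocallyFiniteOrder` instance. -/
structure IsFullHeap {P E : Type*} [PartialOrder E] [LocallyFiniteOrder E]
    (A : P → P → ℤ) (eps : E → P) : Prop where
  /-- elements with equal or adjacent labels are comparable -/
  comparable : ∀ a b : E, (eps a = eps b ∨ Adj A (eps a) (eps b)) → a ≤ b ∨ b ≤ a
  /-- the order is the reflexive-transitive closure of its restriction to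
  pairs with equal or adjacent labels -/
  le_generated : ∀ a b : E, a ≤ b ↔
    Relation.ReflTransGen (fun x y : E => x ≤ y ∧ (eps x = eps y ∨ Adj A (eps x) (eps y))) a b
  /-- each fibre is unbounded above in E -/
  unbounded_above : ∀ (p : P) (a : E), ∃ b, eps b = p ∧ ¬ b ≤ a
  /-- each fibre is unbounded below in E -/
  unbounded_below : ∀ (p : P) (a : E), ∃ b, eps b = p ∧ ¬ a ≤ b
  /-- covering elements with adjacent labels exist -/
  covers : ∀ p p' : P, Adj A p p' → ∀ a : E, eps a = p →
    ∃ b, eps b = p' ∧ (a ⋖ b ∨ b ⋖ a)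
  /-- the defining condition on open intervals between consecutive elements
  of a fibre -/
  interval : ∀ a b : E, a < b → eps a = eps b →
    (∀ c, a < c → c < b → eps c ≠ eps a) →
    (∑ c ∈ Finset.Ioo a b, A (eps a) (eps c)) = -2

/-- The character of a pair of proper ideals:
`chi(F, F')(p) = |(F' \ F) ∩ eps⁻¹(p)| - |(F \ F') ∩ eps⁻¹(p)|`. -/
noncomputable def chiFn {P E : Type*} (eps : E → P) (F F' : Set E) : P → ℤ :=
  fun p => (((F' \ F) ∩ eps ⁻¹' {p}).ncard : ℤ) - (((F \ F') ∩ eps ⁻¹' {p}).ncard : ℤ)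

open Classical in
/-- The operator `S_p` on ideals: remove the (unique) element of label `p`
that can be removed, else add the (unique) element of label `p` that can be
added, else do nothing. -/
noncomputable def Sact {P E : Type*} [PartialOrder E] (eps : E → P) (p : P) (I : Set E) :
    Set E :=
  if h : ∃ a, a ∈ I ∧ eps a = p ∧ IsIdeal (I \ {a}) then I \ {h.choose}
  else if h' : ∃ a, a ∉ I ∧ eps a = p ∧ IsIdeal (I ∪ {a}) then I ∪ {h'.choose}
  else I

/-- The defining relations of the Weyl group of a (doubly laced)
generalized Cartan matrix. -/
def weylRels {P : Type*} (A : P → P → ℤ) : Set (FreeGroup P) :=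
  {r | (∃ p, r = FreeGroup.of p ^ 2) ∨
       (∃ p q, A p q = 0 ∧ r = (FreeGroup.of p * FreeGroup.of q) ^ 2) ∨
       (∃ p q, A p q * A q p = 1 ∧ r = (FreeGroup.of p * FreeGroup.of q) ^ 3) ∨
       (∃ p q, A p q * A q p = 2 ∧ r = (FreeGroup.of p * FreeGroup.of q) ^ 4)}

/-- The Weyl group of a generalized Cartan matrix, as a presented group. -/
abbrev WeylGroup {P : Type*} (A : P → P → ℤ) := PresentedGroup (weylRels A)

/-- The reflection `s_p` in the reflection representation on `ℤ^P`:
`s_p(v) = v - (∑ q, a_{pq} v_q) e_p`. -/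
def reflAct {P : Type*} [Fintype P] [DecidableEq P] (A : P → P → ℤ) (p : P) (v : P → ℤ) :
    P → ℤ :=
  fun r => if r = p then v p - ∑ q, A p q * v q else v r

/-- `A` is of affine type: indecomposable, and `A δ = 0` for some positive
integer vector `δ`. -/
def IsAffine {P : Type*} [Fintype P] (A : P → P → ℤ) : Prop :=
  (∀ p q : P, Relation.ReflTransGen (Adj A) p q) ∧
  ∃ δ : P → ℤ, (∀ p, 0 < δ p) ∧ ∀ p, (∑ q, A p q * δ q) = 0

set_option linter.unusedSectionVars false
section Basics
variable {P E : Type*} [PartialOrder E] [LocallyFiniteOrder E]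
  {A : P → P → ℤ} {eps : E → P}

lemma Adj.symm' (hA : IsGCM A) {p q : P} (h : Adj A p q) : Adj A q p :=
  ⟨h.1.symm, fun h0 => h.2 ((hA.2.2.1 p q).2 h0)⟩

lemma cover_labels (hE : IsFullHeap A eps) {a b : E} (h : a ⋖ b) :
    eps a = eps b ∨ Adj A (eps a) (eps b) := by
  have key : ∀ x : E,
      Relation.ReflTransGen (fun x y : E => x ≤ y ∧ (eps x = eps y ∨ Adj A (eps x) (eps y))) x b →
      x ⋖ b → eps x = eps b ∨ Adj A (eps x) (eps b) := by
    intro x hrtg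
    induction hrtg using Relation.ReflTransGen.head_induction_on with
    | refl => intro h'; exact absurd rfl h'.lt.ne
    | @head x c hxc hcb ih =>
      intro h'
      rcases eq_or_lt_of_le hxc.1 with rfl | hlt
      · exact ih h'
      · have hcble : c ≤ b := (hE.le_generated c b).2 hcb
        have hceq : c = b := by
          rcases eq_or_lt_of_le hcble with rfl | hcb'
          · rfl
          · exact absurd hcb' (h'.2 hlt)
        subst hceq; exact hxc.2
  exact key a ((hE.le_generated a b).1 h.le) h

lemma removable_iff {I : Set E} (hI : IsIdeal I) {a : E} (ha : a ∈ I) :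
    IsIdeal (I \ {a}) ↔ ∀ x ∈ I, ¬ a < x := by
  constructor
  · intro h x hx hax
    have hmem : x ∈ I \ {a} := ⟨hx, fun hxa => hax.ne (by simpa using hxa.symm)⟩
    have : a ∈ I \ {a} := h hmem hax.le
    exact this.2 rfl
  · intro h x hx y hyx
    refine ⟨hI hx.1 hyx, ?_⟩
    rintro rfl
    exact h x hx.1 (lt_of_le_of_ne hyx (Ne.symm hx.2))

lemma addable_iff {I : Set E} (hI : IsIdeal I) {a : E} (ha : a ∉ I) :
    IsIdeal (I ∪ {a}) ↔ ∀ y, y < a → y ∈ I := by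
  constructor
  · intro h y hy
    rcases h (Set.mem_union_right I rfl) hy.le with h' | h'
    · exact h'
    · exact absurd h' hy.ne
  · intro h x hx y hyx
    rcases hx with hx | hx
    · exact Or.inl (hI hx hyx)
    · rcases eq_or_lt_of_le (hyx.trans_eq hx) with rfl | hlt
      · exact Or.inr rfl
      · exact Or.inl (h y hlt)

end Basics
section SactLemmas
variable {P E : Type*} [PartialOrder E] [LocallyFiniteOrder E]
  {A : P → P → ℤ} {eps : E → P}

lemma removable_unique (hE : IsFullHeap A eps) {I : Set E} (hI : IsIdeal I) {a b : E}
    (ha : a ∈ I ∧ IsIdeal (I \ {a})) (hb : b ∈ I ∧ IsIdeal (I \ {b}))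
    (hab : eps a = eps b) : a = b := by
  have hamax := (removable_iff hI ha.1).1 ha.2
  have hbmax := (removable_iff hI hb.1).1 hb.2
  rcases hE.comparable a b (Or.inl hab) with h | h
  · rcases eq_or_lt_of_le h with h' | h'
    · exact h'
    · exact absurd h' (hamax b hb.1)
  · rcases eq_or_lt_of_le h with h' | h'
    · exact h'.symm
    · exact absurd h' (hbmax a ha.1)

lemma addable_unique (hE : IsFullHeap A eps) {I : Set E} (hI : IsIdeal I) {a b : E}
    (ha : a ∉ I ∧ IsIdeal (I ∪ {a})) (hb : b ∉ I ∧ IsIdeal (I ∪ {b}))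
    (hab : eps a = eps b) : a = b := by
  have hamin := (addable_iff hI ha.1).1 ha.2
  have hbmin := (addable_iff hI hb.1).1 hb.2
  rcases hE.comparable a b (Or.inl hab) with h | h
  · rcases eq_or_lt_of_le h with h' | h'
    · exact h'
    · exact absurd (hbmin a h') ha.1
  · rcases eq_or_lt_of_le h with h' | h'
    · exact h'.symm
    · exact absurd (hamin b h') hb.1

lemma Sact_remove (hE : IsFullHeap A eps) {I : Set E} (hI : IsIdeal I) {p : P} {a : E}
    (haI : a ∈ I) (hap : eps a = p) (hrem : IsIdeal (I \ {a})) :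
    Sact eps p I = I \ {a} := by
  classical
  have hex : ∃ b, b ∈ I ∧ eps b = p ∧ IsIdeal (I \ {b}) := ⟨a, haI, hap, hrem⟩
  rw [Sact, dif_pos hex]
  obtain ⟨h1, h2, h3⟩ := hex.choose_spec
  have : hex.choose = a :=
    removable_unique hE hI ⟨h1, h3⟩ ⟨haI, hrem⟩ (h2.trans hap.symm)
  rw [this]

lemma Sact_add (hE : IsFullHeap A eps) {I : Set E} (hI : IsIdeal I) {p : P} {a : E}
    (hno : ¬ ∃ b, b ∈ I ∧ eps b = p ∧ IsIdeal (I \ {b}))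
    (haI : a ∉ I) (hap : eps a = p) (hadd : IsIdeal (I ∪ {a})) :
    Sact eps p I = I ∪ {a} := by
  classical
  have hex : ∃ b, b ∉ I ∧ eps b = p ∧ IsIdeal (I ∪ {b}) := ⟨a, haI, hap, hadd⟩
  rw [Sact, dif_neg hno, dif_pos hex]
  obtain ⟨h1, h2, h3⟩ := hex.choose_spec
  have : hex.choose = a :=
    addable_unique hE hI ⟨h1, h3⟩ ⟨haI, hadd⟩ (h2.trans hap.symm)
  rw [this]

lemma Sact_id {I : Set E} {p : P}
    (hno : ¬ ∃ b, b ∈ I ∧ eps b = p ∧ IsIdeal (I \ {b}))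
    (hno' : ¬ ∃ b, b ∉ I ∧ eps b = p ∧ IsIdeal (I ∪ {b})) :
    Sact eps p I = I := by
  classical
  rw [Sact, dif_neg hno, dif_neg hno']

end SactLemmas
section ChiLemmas
variable {P E : Type*} [DecidableEq P] [PartialOrder E] [LocallyFiniteOrder E]
  {A : P → P → ℤ} {eps : E → P} {F F' : Set E}

lemma chiFn_of_subset {G G' : Set E} (h : G ⊆ G') :
    chiFn eps G G' = fun r => (((G' \ G) ∩ eps ⁻¹' {r}).ncard : ℤ) := by
  funext r
  have h0 : G \ G' = ∅ := Set.diff_eq_empty.2 h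
  simp [chiFn, h0]

lemma chiFn_swap (G G' : Set E) : chiFn eps G G' = -chiFn eps G' G := by
  funext r; simp only [chiFn, Pi.neg_apply]; ring

lemma diff_fiber_finite (hE : IsFullHeap A eps)
    (hF : IsProperIdeal eps F) (hF' : IsProperIdeal eps F') (r : P) :
    ((F \ F') ∩ eps ⁻¹' {r}).Finite := by
  obtain ⟨a', ha'r, ha'F'⟩ := (hF'.2 r).1
  obtain ⟨b, hbr, hbF⟩ := (hF.2 r).2
  refine (Set.finite_Icc a' b).subset ?_
  rintro x ⟨⟨hxF, hxF'⟩, hxr⟩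
  constructor
  · rcases hE.comparable a' x (Or.inl (by rw [ha'r, hxr])) with h | h
    · exact h
    · exact absurd (hF'.1 ha'F' h) hxF'
  · rcases hE.comparable x b (Or.inl (by rw [hbr, hxr])) with h | h
    · exact h
    · exact absurd (hF.1 hxF h) hbF

lemma not_both_fiber (hF : IsIdeal F) (hF' : IsIdeal F') (hE : IsFullHeap A eps) {r : P}
    (h1 : ((F \ F') ∩ eps ⁻¹' {r}).Nonempty) : (F' \ F) ∩ eps ⁻¹' {r} = ∅ := by
  obtain ⟨x, ⟨hxF, hxF'⟩, hxr⟩ := h1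
  ext y
  simp only [Set.mem_inter_iff, Set.mem_diff, Set.mem_preimage, Set.mem_singleton_iff,
    Set.mem_empty_iff_false, iff_false]
  rintro ⟨⟨hyF', hyF⟩, hyr⟩
  rcases hE.comparable x y (Or.inl (by rw [hxr, hyr])) with h | h
  · exact hxF' (hF' hyF' h)
  · exact hyF (hF hxF h)

lemma exists_step (hE : IsFullHeap A eps)
    (hF : IsProperIdeal eps F) (hF' : IsProperIdeal eps F') {q : P}
    (hchi : chiFn eps F F' = Pi.single q 1) :
    ∃ α, α ∉ F ∧ eps α = q ∧ F' = F ∪ {α} := by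
  have hfin1 := diff_fiber_finite hE hF hF'
  have hfin2 := diff_fiber_finite hE hF' hF
  have hzero : ∀ r, (F \ F') ∩ eps ⁻¹' {r} = ∅ ∧
      (r ≠ q → (F' \ F) ∩ eps ⁻¹' {r} = ∅) := by
    intro r
    have hval : (((F' \ F) ∩ eps ⁻¹' {r}).ncard : ℤ) - (((F \ F') ∩ eps ⁻¹' {r}).ncard : ℤ)
        = (Pi.single q 1 : P → ℤ) r := by
      have := congrFun hchi r; simpa [chiFn] using this
    by_cases hemp : (F \ F') ∩ eps ⁻¹' {r} = ∅
    · refine ⟨hemp, fun hrq => ?_⟩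
      rw [hemp, Pi.single_apply, if_neg hrq] at hval
      simp only [Set.ncard_empty, Nat.cast_zero, sub_zero] at hval
      exact (Set.ncard_eq_zero (hfin2 r)).1 (by exact_mod_cast hval)
    · exfalso
      have hne : ((F \ F') ∩ eps ⁻¹' {r}).Nonempty := Set.nonempty_iff_ne_empty.2 hemp
      have h2 := not_both_fiber hF.1 hF'.1 hE hne
      rw [h2] at hval
      have hpos : 0 < ((F \ F') ∩ eps ⁻¹' {r}).ncard := (Set.ncard_pos (hfin1 r)).2 hne
      have h0 : (0:ℤ) ≤ (Pi.single q 1 : P → ℤ) r := by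
        rw [Pi.single_apply]; split <;> norm_num
      rw [← hval] at h0
      simp only [Set.ncard_empty, Nat.cast_zero, zero_sub] at h0
      omega
  -- at q
  have hq : ((F' \ F) ∩ eps ⁻¹' {q}).ncard = 1 := by
    have hval := congrFun hchi q
    simp only [chiFn, (hzero q).1, Set.ncard_empty, Nat.cast_zero, sub_zero,
      Pi.single_eq_same] at hval
    exact_mod_cast hval
  obtain ⟨α, hα⟩ := Set.ncard_eq_one.1 hq
  have hαmem : α ∈ (F' \ F) ∩ eps ⁻¹' {q} := by rw [hα]; rfl
  refine ⟨α, hαmem.1.2, hαmem.2, ?_⟩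
  apply Set.eq_of_subset_of_subset
  · intro x hx
    by_cases hxF : x ∈ F
    · exact Or.inl hxF
    · right
      have : x ∈ (F' \ F) ∩ eps ⁻¹' {eps x} := ⟨⟨hx, hxF⟩, rfl⟩
      rcases eq_or_ne (eps x) q with hxq | hxq
      · rw [hxq, hα] at this; exact this
      · rw [(hzero (eps x)).2 hxq] at this; exact absurd this (Set.notMem_empty x)
  · rintro x (hx | hx)
    · by_contra hxF'
      have : x ∈ (F \ F') ∩ eps ⁻¹' {eps x} := ⟨⟨hx, hxF'⟩, rfl⟩
      rw [(hzero (eps x)).1] at this; exact absurd this (Set.notMem_empty x)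
    · rw [hx]; exact hαmem.1.1

end ChiLemmas
section Chi2
variable {P E : Type*} [DecidableEq P] [PartialOrder E] [LocallyFiniteOrder E]
  {A : P → P → ℤ} {eps : E → P}

lemma chi_union_finset {G : Set E} {D : Finset E} (hD : ∀ x ∈ D, x ∉ G) :
    chiFn eps G (G ∪ ↑D) = fun r => ((D.filter (fun e => eps e = r)).card : ℤ) := by
  classical
  rw [chiFn_of_subset Set.subset_union_left]
  funext r
  have hset : ((G ∪ ↑D) \ G) ∩ eps ⁻¹' {r} = ↑(D.filter (fun e => eps e = r)) := by
    ext e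
    simp only [Set.mem_inter_iff, Set.mem_diff, Set.mem_union, Finset.coe_filter,
      Set.mem_preimage, Set.mem_singleton_iff, Set.mem_setOf_eq, Finset.mem_coe]
    constructor
    · rintro ⟨⟨he | he, heG⟩, her⟩
      · exact absurd he heG
      · exact ⟨he, her⟩
    · rintro ⟨heD, her⟩
      exact ⟨⟨Or.inr heD, hD e heD⟩, her⟩
  rw [hset, Set.ncard_coe_finset]

lemma reflAct_neg {P : Type*} [Fintype P] [DecidableEq P] (A : P → P → ℤ) (p : P)
    (v : P → ℤ) : reflAct A p (-v) = -reflAct A p v := by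
  funext r
  simp only [reflAct, Pi.neg_apply, mul_neg, Finset.sum_neg_distrib]
  split <;> ring

lemma reflAct_single {P : Type*} [Fintype P] [DecidableEq P] (A : P → P → ℤ) (p q : P) :
    reflAct A p (Pi.single q 1) =
      fun r => (if r = q then 1 else 0) + (if r = p then -A p q else 0) := by
  funext r
  have hsum : (∑ s, A p s * (Pi.single q 1 : P → ℤ) s) = A p q := by
    rw [Finset.sum_eq_single q]
    · simp
    · intro b _ hb; simp [Pi.single_apply, hb]
    · intro h; exact absurd (Finset.mem_univ q) h
  simp only [reflAct, hsum, Pi.single_apply]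
  split_ifs <;> simp_all <;> ring

end Chi2
section Key
variable {P E : Type*} [Fintype P] [DecidableEq P] [PartialOrder E] [LocallyFiniteOrder E]
  {A : P → P → ℤ} {eps : E → P}

lemma key_adj (hA : IsGCM A) (hE : IsFullHeap A eps) {F : Set E} (hF : IsProperIdeal eps F)
    {α : E} (hαF : α ∉ F) (hF' : IsProperIdeal eps (F ∪ {α})) {p : P}
    (hpq : p ≠ eps α) (hApq : A p (eps α) ≠ 0) :
    chiFn eps (Sact eps p F) (Sact eps p (F ∪ {α})) =
      fun r => (if r = eps α then 1 else 0) + (if r = p then -A p (eps α) else 0) := by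
  classical
  have hIF : IsIdeal F := hF.1
  have hIF' : IsIdeal (F ∪ {α}) := hF'.1
  have hαF' : α ∈ F ∪ {α} := Or.inr rfl
  have h_below : ∀ y, y < α → y ∈ F := (addable_iff hIF hαF).1 hIF'
  have hadjpq : Adj A p (eps α) := ⟨hpq, hApq⟩
  have hcompα : ∀ x : E, eps x = p → x < α ∨ α < x := by
    intro x hx
    rcases hE.comparable x α (Or.inr (by rw [hx]; exact hadjpq)) with h | h
    · exact Or.inl (lt_of_le_of_ne h (fun hh => hpq (by rw [← hx, hh])))
    · exact Or.inr (lt_of_le_of_ne h (fun hh => hpq (by rw [← hx, ← hh])))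
  obtain ⟨a, hap, haF⟩ := (hF.2 p).1
  obtain ⟨b, hbp, hbF'⟩ := (hF'.2 p).2
  have haα : a < α := (hcompα a hap).resolve_right (fun h => hαF (hIF haF h.le))
  have hαb : α < b := (hcompα b hbp).resolve_left (fun h => hbF' (Or.inl (h_below b h)))
  -- the fibre element β just below α
  have hT1ne : ((Finset.Icc a α).filter (fun x => eps x = p)).Nonempty :=
    ⟨a, by simp [Finset.mem_Icc, haα.le, hap]⟩
  obtain ⟨β, hβT, hβmax0⟩ : ∃ m ∈ (Finset.Icc a α).filter (fun x => eps x = p), ∀ z ∈ (Finset.Icc a α).filter (fun x => eps x = p), ¬ m < z := (Finset.exists_maximal hT1ne).imp fun m hm => ⟨hm.1, fun x hx hlt => lt_irrefl _ (hlt.trans_le (hm.2 hx hlt.le))⟩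
  have hβT' := hβT
  rw [Finset.mem_filter, Finset.mem_Icc] at hβT'
  obtain ⟨⟨haβ, hβα'⟩, hβp⟩ := hβT'
  have hβtop : ∀ x ∈ (Finset.Icc a α).filter (fun x => eps x = p), x ≤ β := by
    intro x hx
    have hxp : eps x = p := (Finset.mem_filter.1 hx).2
    rcases hE.comparable x β (Or.inl (by rw [hxp, hβp])) with h | h
    · exact h
    · rcases eq_or_lt_of_le h with h' | h'
      · exact h'.ge
      · exact absurd h' (hβmax0 x hx)
  have hβα : β < α := lt_of_le_of_ne hβα' (fun hh => hpq ((hh ▸ hβp).symm))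
  have hβF : β ∈ F := h_below β hβα
  have hβub : ∀ x, eps x = p → x < α → x ≤ β := by
    intro x hx hxα
    rcases hE.comparable x a (Or.inl (by rw [hx, hap])) with h | h
    · exact h.trans haβ
    · exact hβtop x (by simp [Finset.mem_Icc, h, hxα.le, hx])
  -- the fibre element γ just above α
  have hT2ne : ((Finset.Icc α b).filter (fun x => eps x = p)).Nonempty :=
    ⟨b, by simp [Finset.mem_Icc, hαb.le, hbp]⟩
  obtain ⟨γ, hγT, hγmin0⟩ : ∃ m ∈ (Finset.Icc α b).filter (fun x => eps x = p), ∀ z ∈ (Finset.Icc α b).filter (fun x => eps x = p), ¬ z < m := (Finset.exists_minimal hT2ne).imp fun m hm => ⟨hm.1, fun x hx hlt => lt_irrefl _ (hlt.trans_le (hm.2 hx hlt.le))⟩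
  have hγT' := hγT
  rw [Finset.mem_filter, Finset.mem_Icc] at hγT'
  obtain ⟨⟨hαγ', hγb⟩, hγp⟩ := hγT'
  have hγbot : ∀ x ∈ (Finset.Icc α b).filter (fun x => eps x = p), γ ≤ x := by
    intro x hx
    have hxp : eps x = p := (Finset.mem_filter.1 hx).2
    rcases hE.comparable x γ (Or.inl (by rw [hxp, hγp])) with h | h
    · rcases eq_or_lt_of_le h with h' | h'
      · exact h'.ge
      · exact absurd h' (hγmin0 x hx)
    · exact h
  have hαγ : α < γ := lt_of_le_of_ne hαγ' (fun hh => hpq ((hh ▸ hγp).symm))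
  have hγlb : ∀ x, eps x = p → α < x → γ ≤ x := by
    intro x hx hαx
    rcases hE.comparable x b (Or.inl (by rw [hx, hbp])) with h | h
    · exact hγbot x (by simp [Finset.mem_Icc, hαx.le, h, hx])
    · exact hγb.trans h
  have hγF' : γ ∉ F ∪ {α} := by
    rintro (h | h)
    · exact hαF (hIF h hαγ.le)
    · exact hαγ.ne' h
  have hγF : γ ∉ F := fun h => hγF' (Or.inl h)
  have htri : ∀ x, eps x = p → x ≤ β ∨ γ ≤ x := by
    intro x hx
    rcases hcompα x hx with h | h
    · exact Or.inl (hβub x hx h)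
    · exact Or.inr (hγlb x hx h)
  have hβγ : β < γ := hβα.trans hαγ
  have hmid : ∀ c, β < c → c < γ → eps c ≠ eps β := by
    intro c h1 h2 hc
    rcases htri c (hc.trans hβp) with h | h
    · exact absurd (h1.trans_le h) (lt_irrefl β)
    · exact absurd (h2.trans_le h) (lt_irrefl c)
  have hsum := hE.interval β γ hβγ (by rw [hβp, hγp]) hmid
  rw [hβp] at hsum
  have hαIoo : α ∈ Finset.Ioo β γ := Finset.mem_Ioo.2 ⟨hβα, hαγ⟩
  have hnonpos : ∀ c ∈ Finset.Ioo β γ, A p (eps c) ≤ 0 := by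
    intro c hc
    rw [Finset.mem_Ioo] at hc
    refine hA.2.1 p (eps c) (fun hh => ?_)
    rcases htri c hh.symm with h | h
    · exact absurd (hc.1.trans_le h) (lt_irrefl β)
    · exact absurd (hc.2.trans_le h) (lt_irrefl c)
  have hsum' : ∑ c ∈ (Finset.Ioo β γ).erase α, A p (eps c) = -2 - A p (eps α) := by
    have h := Finset.add_sum_erase _ (fun c => A p (eps c)) hαIoo
    rw [hsum] at h
    linarith
  -- witness extraction lemmas
  have hCwit : ∀ x ∈ F, β < x →
      ∃ c ∈ (Finset.Ioo β γ).erase α, c ∈ F ∧ A p (eps c) ≠ 0 := by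
    intro x hxF hβx
    have hUne : (Finset.Ioc β x).Nonempty := ⟨x, Finset.mem_Ioc.2 ⟨hβx, le_rfl⟩⟩
    obtain ⟨c, hcU, hcmin⟩ : ∃ m ∈ Finset.Ioc β x, ∀ z ∈ Finset.Ioc β x, ¬ z < m := (Finset.exists_minimal hUne).imp fun m hm => ⟨hm.1, fun x hx hlt => lt_irrefl _ (hlt.trans_le (hm.2 hx hlt.le))⟩
    rw [Finset.mem_Ioc] at hcU
    have hcF : c ∈ F := hIF hxF hcU.2
    have hcov : β ⋖ c :=
      ⟨hcU.1, fun e he1 he2 => hcmin e (Finset.mem_Ioc.2 ⟨he1, he2.le.trans hcU.2⟩) he2⟩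
    have hlab : Adj A p (eps c) := by
      rcases cover_labels hE hcov with h | h
      · exfalso
        rcases htri c (h ▸ hβp) with h' | h'
        · exact absurd (hcU.1.trans_le h') (lt_irrefl β)
        · exact hγF (hIF hcF h')
      · rwa [hβp] at h
    have hcγ : c < γ := by
      rcases hE.comparable c γ (Or.inr (by rw [hγp]; exact Adj.symm' hA hlab)) with h | h
      · exact lt_of_le_of_ne h (fun hh => hγF (hh ▸ hcF))
      · exact absurd (hIF hcF h) hγF
    exact ⟨c, Finset.mem_erase.2 ⟨fun hh => hαF (hh ▸ hcF), Finset.mem_Ioo.2 ⟨hcU.1, hcγ⟩⟩,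
      hcF, hlab.2⟩
  have hDwit : ∀ y, y < γ → y ∉ F ∪ {α} →
      ∃ d ∈ (Finset.Ioo β γ).erase α, d ∉ F ∪ {α} ∧ A p (eps d) ≠ 0 := by
    intro y hyγ hyF'
    have hVne : ((Finset.Ico y γ).filter (fun z => z ∉ F ∪ {α})).Nonempty :=
      ⟨y, by
        simp only [Finset.mem_filter, Finset.mem_Ico]
        exact ⟨⟨le_rfl, hyγ⟩, hyF'⟩⟩
    obtain ⟨d, hdV, hdmax⟩ : ∃ m ∈ (Finset.Ico y γ).filter (fun z => z ∉ F ∪ {α}), ∀ z ∈ (Finset.Ico y γ).filter (fun z => z ∉ F ∪ {α}), ¬ m < z := (Finset.exists_maximal hVne).imp fun m hm => ⟨hm.1, fun x hx hlt => lt_irrefl _ (hlt.trans_le (hm.2 hx hlt.le))⟩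
    rw [Finset.mem_filter, Finset.mem_Ico] at hdV
    obtain ⟨⟨hyd, hdγ⟩, hdF'⟩ := hdV
    have hcov : d ⋖ γ := by
      refine ⟨hdγ, fun e he1 he2 => ?_⟩
      by_cases heF : e ∈ F ∪ {α}
      · exact hdF' (hIF' heF he1.le)
      · exact hdmax e (by
          simp only [Finset.mem_filter, Finset.mem_Ico]
          exact ⟨⟨hyd.trans he1.le, he2⟩, heF⟩) he1
    have hlab : Adj A (eps d) p := by
      rcases cover_labels hE hcov with h | h
      · exfalso
        rcases htri d (h.trans hγp) with h' | h'
        · exact hdF' (Or.inl (hIF hβF h'))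
        · exact absurd (hdγ.trans_le h') (lt_irrefl d)
      · rwa [hγp] at h
    have hβd : β < d := by
      rcases hE.comparable β d (Or.inr (by rw [hβp]; exact Adj.symm' hA hlab)) with h | h
      · exact lt_of_le_of_ne h (fun hh => hdF' (Or.inl (hh ▸ hβF)))
      · exact (hdF' (Or.inl (hIF hβF h))).elim
    exact ⟨d, Finset.mem_erase.2 ⟨fun hh => hdF' (hh ▸ hαF'), Finset.mem_Ioo.2 ⟨hβd, hdγ⟩⟩,
      hdF', fun hh => hlab.2 ((hA.2.2.1 p (eps d)).1 hh)⟩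
  -- no removable element of label p in F ∪ {α}
  have hnorem' : ¬ ∃ c, c ∈ F ∪ {α} ∧ eps c = p ∧ IsIdeal ((F ∪ {α}) \ {c}) := by
    rintro ⟨δ, hδF', hδp, hδrem⟩
    have hδmax := (removable_iff hIF' hδF').1 hδrem
    rcases htri δ hδp with h | h
    · exact hδmax α hαF' (lt_of_le_of_lt h hβα)
    · exact hγF' (hIF' hδF' h)
  -- removable in F forces β ; addable in F ∪ {α} forces γ ; no addable in F
  have hremβ : ∀ δ, δ ∈ F → eps δ = p → IsIdeal (F \ {δ}) → δ = β := by
    intro δ hδF hδp hδrem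
    have hδmax := (removable_iff hIF hδF).1 hδrem
    rcases htri δ hδp with h | h
    · rcases eq_or_lt_of_le h with h' | h'
      · exact h'
      · exact absurd h' (hδmax β hβF)
    · exact absurd (hIF hδF h) hγF
  have haddγ' : ∀ δ, δ ∉ F ∪ {α} → eps δ = p → IsIdeal ((F ∪ {α}) ∪ {δ}) → δ = γ := by
    intro δ hδF' hδp hδadd
    have hδbel := (addable_iff hIF' hδF').1 hδadd
    rcases htri δ hδp with h | h
    · exact absurd (Or.inl (hIF hβF h)) hδF'
    · rcases eq_or_lt_of_le h with h' | h'
      · exact h'.symm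
      · exact absurd (hδbel γ h') hγF'
  have hnoaddF : ¬ ∃ δ, δ ∉ F ∧ eps δ = p ∧ IsIdeal (F ∪ {δ}) := by
    rintro ⟨δ, hδF, hδp, hδadd⟩
    have hδbel := (addable_iff hIF hδF).1 hδadd
    rcases htri δ hδp with h | h
    · exact hδF (hIF hβF h)
    · rcases eq_or_lt_of_le h with h' | h'
      · exact hαF (hδbel α (h' ▸ hαγ))
      · exact hγF (hδbel γ h')
  have hval : A p (eps α) = -1 ∨ A p (eps α) = -2 := by
    have h2 := hA.2.1 p (eps α) hpq
    rcases hA.2.2.2 p (eps α) with h | h | h | h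
    · omega
    · exact absurd h hApq
    · exact Or.inl h
    · exact Or.inr h
  have hβne : β ≠ α := hβα.ne
  have hγne : γ ≠ α := hαγ.ne'
  have hβγne : β ≠ γ := hβγ.ne
  rcases hval with hv | hv
  · -- A p q = -1
    by_cases hβmaxP : ∀ x ∈ F, ¬ β < x
    · by_cases hγaddP : ∀ y, y < γ → y ∈ F ∪ {α}
      · exfalso
        have hzero : ∑ c ∈ (Finset.Ioo β γ).erase α, A p (eps c) = 0 := by
          refine Finset.sum_eq_zero fun c hc => ?_
          rw [Finset.mem_erase, Finset.mem_Ioo] at hc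
          by_contra hcA
          by_cases hcF' : c ∈ F ∪ {α}
          · have hcF : c ∈ F := hcF'.resolve_right (fun h => hc.1 h)
            exact hβmaxP c hcF hc.2.1
          · exact hcF' (hγaddP c hc.2.2)
        rw [hsum', hv] at hzero
        norm_num at hzero
      · -- β removable, γ not addable to F ∪ {α}
        push_neg at hγaddP
        obtain ⟨y, hyγ, hyF'⟩ := hγaddP
        have hnoadd' : ¬ ∃ δ, δ ∉ F ∪ {α} ∧ eps δ = p ∧ IsIdeal ((F ∪ {α}) ∪ {δ}) := by
          rintro ⟨δ, h1, h2, h3⟩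
          have hδγ := haddγ' δ h1 h2 h3
          subst hδγ
          exact hyF' ((addable_iff hIF' h1).1 h3 y hyγ)
        rw [Sact_remove hE hIF hβF hβp ((removable_iff hIF hβF).2 hβmaxP),
          Sact_id hnorem' hnoadd']
        have hrw : F ∪ {α} = (F \ {β}) ∪ ↑({α, β} : Finset E) := by
          ext x
          simp only [Set.mem_union, Set.mem_diff, Set.mem_singleton_iff, Finset.coe_insert,
            Finset.coe_singleton, Set.mem_insert_iff]
          by_cases hxβ : x = β <;> simp [hxβ, hβF] <;> tauto
        rw [hrw, chi_union_finset (by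
          intro x hx
          rw [Finset.mem_insert, Finset.mem_singleton] at hx
          rcases hx with rfl | rfl
          · exact fun h => hαF h.1
          · exact fun h => h.2 rfl)]
        funext r
        rw [Finset.filter_insert, Finset.filter_singleton]
        by_cases hr1 : r = eps α
        · rw [if_pos hr1.symm, if_neg (show ¬ eps β = r by rw [hβp, hr1]; exact hpq),
            if_pos hr1, if_neg (show ¬ r = p from fun hh => hpq (by rw [← hh, hr1]))]
          simp
        · by_cases hr2 : r = p
          · rw [if_neg (show ¬ eps α = r from fun hh => hr1 hh.symm),
              if_pos (show eps β = r by rw [hβp, hr2]), if_neg hr1, if_pos hr2, hv]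
            simp
          · rw [if_neg (show ¬ eps α = r from fun hh => hr1 hh.symm),
              if_neg (show ¬ eps β = r from fun hh => hr2 (by rw [← hh, hβp])),
              if_neg hr1, if_neg hr2]
            simp
    · -- β not maximal: γ must be addable to F ∪ {α}
      push_neg at hβmaxP
      obtain ⟨x, hxF, hβx⟩ := hβmaxP
      obtain ⟨c, hcmem, hcF, hcA⟩ := hCwit x hxF hβx
      have hγaddP : ∀ y, y < γ → y ∈ F ∪ {α} := by
        by_contra h
        push_neg at h
        obtain ⟨y, hyγ, hyF'⟩ := h
        obtain ⟨d, hdmem, hdF', hdA⟩ := hDwit y hyγ hyF'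
        have hcd : c ≠ d := fun hh => hdF' (Or.inl (hh ▸ hcF))
        have hsub : ({c, d} : Finset E) ⊆ (Finset.Ioo β γ).erase α := by
          intro z hz
          rw [Finset.mem_insert, Finset.mem_singleton] at hz
          rcases hz with rfl | rfl
          · exact hcmem
          · exact hdmem
        have h1 := Finset.sum_sdiff (f := fun c => A p (eps c)) hsub
        rw [Finset.sum_pair hcd] at h1
        have h2 : ∑ z ∈ (Finset.Ioo β γ).erase α \ {c, d}, A p (eps z) ≤ 0 :=
          Finset.sum_nonpos fun z hz =>
            hnonpos z (Finset.mem_of_mem_erase (Finset.mem_sdiff.1 hz).1)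
        have h3 : A p (eps c) ≤ -1 := by
          have := hnonpos c (Finset.mem_of_mem_erase hcmem); omega
        have h4 : A p (eps d) ≤ -1 := by
          have := hnonpos d (Finset.mem_of_mem_erase hdmem); omega
        rw [hsum', hv] at h1
        linarith
      have hnoremF : ¬ ∃ δ, δ ∈ F ∧ eps δ = p ∧ IsIdeal (F \ {δ}) := by
        rintro ⟨δ, h1, h2, h3⟩
        have hδβ := hremβ δ h1 h2 h3
        subst hδβ
        exact (removable_iff hIF h1).1 h3 x hxF hβx
      rw [Sact_id hnoremF hnoaddF,
        Sact_add hE hIF' hnorem' hγF' hγp ((addable_iff hIF' hγF').2 hγaddP)]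
      have hrw : (F ∪ {α}) ∪ {γ} = F ∪ ↑({α, γ} : Finset E) := by
        ext x
        simp only [Set.mem_union, Set.mem_singleton_iff, Finset.coe_insert,
          Finset.coe_singleton, Set.mem_insert_iff]
        tauto
      rw [hrw, chi_union_finset (by
        intro z hz
        rw [Finset.mem_insert, Finset.mem_singleton] at hz
        rcases hz with rfl | rfl
        · exact hαF
        · exact hγF)]
      funext r
      rw [Finset.filter_insert, Finset.filter_singleton]
      by_cases hr1 : r = eps α
      · rw [if_pos hr1.symm, if_neg (show ¬ eps γ = r by rw [hγp, hr1]; exact hpq),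
          if_pos hr1, if_neg (show ¬ r = p from fun hh => hpq (by rw [← hh, hr1]))]
        simp
      · by_cases hr2 : r = p
        · rw [if_neg (show ¬ eps α = r from fun hh => hr1 hh.symm),
            if_pos (show eps γ = r by rw [hγp, hr2]), if_neg hr1, if_pos hr2, hv]
          simp
        · rw [if_neg (show ¬ eps α = r from fun hh => hr1 hh.symm),
            if_neg (show ¬ eps γ = r from fun hh => hr2 (by rw [← hh, hγp])),
            if_neg hr1, if_neg hr2]
          simp
  · -- A p q = -2 : β removable and γ addable
    have hzero : ∀ c ∈ (Finset.Ioo β γ).erase α, A p (eps c) = 0 := by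
      have hs : ∑ c ∈ (Finset.Ioo β γ).erase α, A p (eps c) = 0 := by
        rw [hsum', hv]; norm_num
      exact fun c hc =>
        (Finset.sum_eq_zero_iff_of_nonpos
          (fun i hi => hnonpos i (Finset.mem_of_mem_erase hi))).1 hs c hc
    have hβmaxP : ∀ x ∈ F, ¬ β < x := by
      intro x hxF hβx
      obtain ⟨c, hc, hcF, hcA⟩ := hCwit x hxF hβx
      exact hcA (hzero c hc)
    have hγaddP : ∀ y, y < γ → y ∈ F ∪ {α} := by
      intro y hy
      by_contra hyF'
      obtain ⟨d, hd, _, hdA⟩ := hDwit y hy hyF'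
      exact hdA (hzero d hd)
    rw [Sact_remove hE hIF hβF hβp ((removable_iff hIF hβF).2 hβmaxP),
      Sact_add hE hIF' hnorem' hγF' hγp ((addable_iff hIF' hγF').2 hγaddP)]
    have hrw : (F ∪ {α}) ∪ {γ} = (F \ {β}) ∪ ↑({α, β, γ} : Finset E) := by
      ext x
      simp only [Set.mem_union, Set.mem_diff, Set.mem_singleton_iff, Finset.coe_insert,
        Finset.coe_singleton, Set.mem_insert_iff]
      by_cases hxβ : x = β <;> simp [hxβ, hβF] <;> tauto
    rw [hrw, chi_union_finset (by
      intro z hz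
      simp only [Finset.mem_insert, Finset.mem_singleton] at hz
      rcases hz with rfl | rfl | rfl
      · exact fun h => hαF h.1
      · exact fun h => h.2 rfl
      · exact fun h => hγF h.1)]
    funext r
    rw [Finset.filter_insert, Finset.filter_insert, Finset.filter_singleton]
    by_cases hr1 : r = eps α
    · rw [if_pos hr1.symm, if_neg (show ¬ eps β = r by rw [hβp, hr1]; exact hpq),
        if_neg (show ¬ eps γ = r by rw [hγp, hr1]; exact hpq),
        if_pos hr1, if_neg (show ¬ r = p from fun hh => hpq (by rw [← hh, hr1]))]
      simp
    · by_cases hr2 : r = p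
      · rw [if_neg (show ¬ eps α = r from fun hh => hr1 hh.symm),
          if_pos (show eps β = r by rw [hβp, hr2]),
          if_pos (show eps γ = r by rw [hγp, hr2]), if_neg hr1, if_pos hr2, hv]
        rw [Finset.card_insert_of_notMem (by simp [hβγne]), Finset.card_singleton]
        norm_num
      · rw [if_neg (show ¬ eps α = r from fun hh => hr1 hh.symm),
          if_neg (show ¬ eps β = r from fun hh => hr2 (by rw [← hh, hβp])),
          if_neg (show ¬ eps γ = r from fun hh => hr2 (by rw [← hh, hγp])),
          if_neg hr1, if_neg hr2]
        simp

lemma key (hA : IsGCM A) (hE : IsFullHeap A eps) {F : Set E} (hF : IsProperIdeal eps F)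
    {α : E} (hαF : α ∉ F) (hF' : IsProperIdeal eps (F ∪ {α})) (p : P) :
    chiFn eps (Sact eps p F) (Sact eps p (F ∪ {α})) = reflAct A p (Pi.single (eps α) 1) := by
  classical
  have hIF : IsIdeal F := hF.1
  have hIF' : IsIdeal (F ∪ {α}) := hF'.1
  have hαF' : α ∈ F ∪ {α} := Or.inr rfl
  have h_below : ∀ y, y < α → y ∈ F := (addable_iff hIF hαF).1 hIF'
  rw [reflAct_single]
  have hchi1 : chiFn eps F (F ∪ {α}) = fun r => if eps α = r then 1 else 0 := by
    have h1 := chi_union_finset (eps := eps) (G := F) (D := {α}) (by simpa using hαF)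
    simp only [Finset.coe_singleton] at h1
    rw [h1]
    funext r
    by_cases h : eps α = r <;> simp [Finset.filter_singleton, h]
  rcases eq_or_ne p (eps α) with hpq | hpq
  · -- case p = eps α
    have hnorem : ¬ ∃ b, b ∈ F ∧ eps b = p ∧ IsIdeal (F \ {b}) := by
      rintro ⟨β, hβF, hβp, hβrem⟩
      have hβmax := (removable_iff hIF hβF).1 hβrem
      have hβα : β < α := by
        rcases hE.comparable β α (Or.inl (by rw [hβp, hpq])) with h | h
        · exact lt_of_le_of_ne h (by rintro rfl; exact hαF hβF)
        · exact absurd (hIF hβF h) hαF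
      have hmid : ∀ c, β < c → c < α → eps c ≠ eps β :=
        fun c h1 h2 _ => hβmax c (h_below c h2) h1
      have hint := hE.interval β α hβα (by rw [hβp, hpq]) hmid
      have hIoo : Finset.Ioo β α = ∅ :=
        Finset.eq_empty_of_forall_notMem fun z hz => by
          rw [Finset.mem_Ioo] at hz
          exact hβmax z (h_below z hz.2) hz.1
      rw [hIoo, Finset.sum_empty] at hint
      norm_num at hint
    have hS1 : Sact eps p F = F ∪ {α} := Sact_add hE hIF hnorem hαF hpq.symm hIF'
    have hd : (F ∪ {α}) \ {α} = F := by
      ext x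
      simp only [Set.mem_diff, Set.mem_union, Set.mem_singleton_iff]
      constructor
      · rintro ⟨hx | hx, hxα⟩
        · exact hx
        · exact absurd hx hxα
      · intro hx; exact ⟨Or.inl hx, fun h => hαF (h ▸ hx)⟩
    have hS2 : Sact eps p (F ∪ {α}) = F := by
      rw [Sact_remove hE hIF' hαF' hpq.symm (by rw [hd]; exact hIF), hd]
    rw [hS1, hS2, chiFn_swap, hchi1]
    funext r
    simp only [Pi.neg_apply]
    by_cases h : r = eps α
    · rw [if_pos h.symm, if_pos h, if_pos (h.trans hpq.symm)]
      rw [hpq, hA.1]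
      norm_num
    · rw [if_neg (fun hh => h hh.symm), if_neg h, if_neg (fun hh : r = p => h (hh.trans hpq))]
      norm_num
  · -- p ≠ eps α
    by_cases hApq : A p (eps α) = 0
    · -- non-adjacent case
      have hnocov1 : ∀ {u v : E}, u ⋖ v → eps u = p → eps v = eps α → False := by
        intro u v hc hu hv
        rcases cover_labels hE hc with h | h
        · exact hpq (hu ▸ hv ▸ h)
        · rw [hu, hv] at h; exact h.2 hApq
      have hnocov2 : ∀ {u v : E}, u ⋖ v → eps u = eps α → eps v = p → False := by
        intro u v hc hu hv
        rcases cover_labels hE hc with h | h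
        · exact hpq (hv ▸ hu ▸ h).symm
        · rw [hu, hv] at h
          exact h.2 ((hA.2.2.1 (eps α) p).2 hApq)
      have main : ∃ G : Set E, α ∉ G ∧ Sact eps p F = G ∧ Sact eps p (F ∪ {α}) = G ∪ {α} := by
        by_cases hrem : ∃ b, b ∈ F ∧ eps b = p ∧ IsIdeal (F \ {b})
        · obtain ⟨β, hβF, hβp, hβrem⟩ := hrem
          have hβmax := (removable_iff hIF hβF).1 hβrem
          have hβα : β ≠ α := fun h => hpq (hβp ▸ h ▸ rfl)
          have hnβα : ¬ β < α := by
            intro hlt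
            refine hnocov1 ⟨hlt, fun z h1 h2 => hβmax z (h_below z h2) h1⟩ hβp rfl
          have hβmax' : ∀ x ∈ F ∪ {α}, ¬ β < x := by
            rintro x (hx | hx)
            · exact hβmax x hx
            · rw [Set.mem_singleton_iff] at hx; rw [hx]; exact hnβα
          have hβrem' : IsIdeal ((F ∪ {α}) \ {β}) :=
            (removable_iff hIF' (Or.inl hβF)).2 hβmax'
          refine ⟨F \ {β}, fun h => hαF h.1, Sact_remove hE hIF hβF hβp hβrem, ?_⟩
          rw [Sact_remove hE hIF' (Or.inl hβF) hβp hβrem']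
          ext x
          simp only [Set.mem_diff, Set.mem_union, Set.mem_singleton_iff]
          constructor
          · rintro ⟨hx | hx, hxβ⟩
            · exact Or.inl ⟨hx, hxβ⟩
            · exact Or.inr hx
          · rintro (⟨hx, hxβ⟩ | hx)
            · exact ⟨Or.inl hx, hxβ⟩
            · exact ⟨Or.inr hx, fun h => hβα (h ▸ hx)⟩
        · have hnorem' : ¬ ∃ b, b ∈ F ∪ {α} ∧ eps b = p ∧ IsIdeal ((F ∪ {α}) \ {b}) := by
            rintro ⟨β, hβF', hβp, hβrem'⟩
            have hβα : β ≠ α := fun h => hpq (hβp ▸ h ▸ rfl)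
            have hβF : β ∈ F := hβF'.resolve_right (fun h => hβα h)
            have hβmax' := (removable_iff hIF' hβF').1 hβrem'
            exact hrem ⟨β, hβF, hβp, (removable_iff hIF hβF).2
              fun x hx => hβmax' x (Or.inl hx)⟩
          by_cases hadd : ∃ b, b ∉ F ∧ eps b = p ∧ IsIdeal (F ∪ {b})
          · obtain ⟨γ, hγF, hγp, hγadd⟩ := hadd
            have hγα : γ ≠ α := fun h => hpq (hγp ▸ h ▸ rfl)
            have hγF' : γ ∉ F ∪ {α} := by
              rintro (h | h)
              · exact hγF h
              · exact hγα h
            have hγbelow := (addable_iff hIF hγF).1 hγadd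
            have hγadd' : IsIdeal ((F ∪ {α}) ∪ {γ}) :=
              (addable_iff hIF' hγF').2 fun y hy => Or.inl (hγbelow y hy)
            refine ⟨F ∪ {γ}, ?_, Sact_add hE hIF hrem hγF hγp hγadd, ?_⟩
            · rintro (h | h)
              · exact hαF h
              · exact hγα h.symm
            · rw [Sact_add hE hIF' hnorem' hγF' hγp hγadd']
              ext x
              simp only [Set.mem_union, Set.mem_singleton_iff]
              tauto
          · have hnoadd' : ¬ ∃ b, b ∉ F ∪ {α} ∧ eps b = p ∧ IsIdeal ((F ∪ {α}) ∪ {b}) := by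
              rintro ⟨γ, hγF', hγp, hγadd'⟩
              have hγα : γ ≠ α := fun h => hpq (hγp ▸ h ▸ rfl)
              have hγF : γ ∉ F := fun h => hγF' (Or.inl h)
              have hγbelow' := (addable_iff hIF' hγF').1 hγadd'
              have hnαγ : ¬ α < γ := by
                intro hlt
                refine hnocov2 ⟨hlt, fun z h1 h2 => ?_⟩ rfl hγp
                rcases hγbelow' z h2 with hz | hz
                · exact absurd (hIF hz h1.le) hαF
                · rw [Set.mem_singleton_iff] at hz
                  exact h1.ne' hz
              refine hadd ⟨γ, hγF, hγp, (addable_iff hIF hγF).2 fun y hy => ?_⟩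
              rcases hγbelow' y hy with hz | hz
              · exact hz
              · rw [Set.mem_singleton_iff] at hz
                exact absurd (hz ▸ hy) hnαγ
            exact ⟨F, hαF, Sact_id hrem hadd, Sact_id hnorem' hnoadd'⟩
      obtain ⟨G, hαG, hS1, hS2⟩ := main
      rw [hS1, hS2]
      have h1 := chi_union_finset (eps := eps) (G := G) (D := {α}) (by simpa using hαG)
      simp only [Finset.coe_singleton] at h1
      rw [h1]
      funext r
      rw [Finset.filter_singleton]
      by_cases h : eps α = r
      · rw [if_pos h, if_pos h.symm, if_neg (fun hh : r = p => hpq ((h.trans hh).symm))]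
        simp
      · rw [if_neg h, if_neg (fun hh : r = eps α => h hh.symm)]
        simp [hApq]
    · rw [key_adj hA hE hF hαF hF' hpq hApq]

end Key
/-- If `chi(F, F') = ± e_q`, then for every vertex `p`,
`chi(S_p(F), S_p(F')) = s_p(chi(F, F'))` where `s_p` acts via the reflection
representation on `ℤ^P`. -/
theorem stmt3 {P E : Type*} [Fintype P] [DecidableEq P] [PartialOrder E]
    [LocallyFiniteOrder E] {A : P → P → ℤ} {eps : E → P}
    (hA : IsGCM A) (hE : IsFullHeap A eps)
    {F F' : Set E} (hF : IsProperIdeal eps F) (hF' : IsProperIdeal eps F') (q : P)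
    (hchi : chiFn eps F F' = Pi.single q 1 ∨ chiFn eps F F' = -Pi.single q 1) :
    ∀ p : P, chiFn eps (Sact eps p F) (Sact eps p F') = reflAct A p (chiFn eps F F') := by
  intro p
  rcases hchi with h | h
  · obtain ⟨α, hαF, hαq, hFF'⟩ := exists_step hE hF hF' h
    subst hFF'
    rw [h, ← hαq]
    exact key hA hE hF hαF hF' p
  · have h' : chiFn eps F' F = Pi.single q 1 := by
      rw [chiFn_swap, h, neg_neg]
    obtain ⟨α, hαF', hαq, hFF'⟩ := exists_step hE hF' hF h'
    subst hFF'
    rw [chiFn_swap, key hA hE hF' hαF' hF p, h, reflAct_neg, hαq]
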